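/- For every even integer r ≥ 4 and every integer h ≥ 1, the girth of the armchair nanotube graph AT(r,h) equals 6. -/

import Mathlib

/-- The armchair nanotube `AT(r,h)` with `r` columns of hexagons, each containing `h` hexagons:
vertex set `ZMod r × {0,…,2h+1}`; vertical edges join `(i,j)` and `(i,j+1)`, and horizontal
edges join `(i,j)` and `(i+1,j)` when `i + j` is even. -/
def AT (r h : ℕ) : SimpleGraph (ZMod r × Fin (2 * h + 2)) :=
  SimpleGraph.fromRel (fun p q =>
    (p.1 = q.1 ∧ (q.2 : ℕ) = (p.2 : ℕ) + 1) ∨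
    (p.2 = q.2 ∧ q.1 = p.1 + 1 ∧ Even (p.1.val + (p.2 : ℕ))))



def Earith (r : ℕ) (a b a' b' : ℕ) : Prop :=
  (a = a' ∧ (b' = b + 1 ∨ b = b' + 1)) ∨
  (b = b' ∧ ((a + b) % 2 = 0 ∧ (a' = a + 1 ∨ (a = r - 1 ∧ a' = 0))
           ∨ (a' + b') % 2 = 0 ∧ (a = a' + 1 ∨ (a' = r - 1 ∧ a = 0))))

lemma val_succ {r : ℕ} (hr : 4 ≤ r) (i : ZMod r) :
    (i + 1).val = i.val + 1 ∨ (i.val = r - 1 ∧ (i + 1).val = 0) := by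
  haveI : NeZero r := ⟨by omega⟩
  haveI : Fact (1 < r) := ⟨by omega⟩
  have h1 : (1 : ZMod r).val = 1 := ZMod.val_one r
  have hv : i.val < r := ZMod.val_lt i
  have ha : (i + 1).val = (i.val + 1) % r := by rw [ZMod.val_add, h1]
  rcases Nat.lt_or_ge (i.val + 1) r with h | h
  · left; rw [ha, Nat.mod_eq_of_lt h]
  · right
    have : i.val + 1 = r := by omega
    exact ⟨by omega, by rw [ha, this, Nat.mod_self]⟩

lemma adj_arith {r h : ℕ} (hr : 4 ≤ r) {p q : ZMod r × Fin (2 * h + 2)}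
    (hpq : (AT r h).Adj p q) :
    ¬(p.1.val = q.1.val ∧ (p.2 : ℕ) = (q.2 : ℕ)) ∧
      Earith r p.1.val (p.2 : ℕ) q.1.val (q.2 : ℕ) := by
  haveI : NeZero r := ⟨by omega⟩
  rw [AT, SimpleGraph.fromRel_adj] at hpq
  obtain ⟨hne, hrel⟩ := hpq
  constructor
  · rintro ⟨h1, h2⟩
    exact hne (Prod.ext (ZMod.val_injective r h1) (Fin.ext h2))
  · rcases hrel with (⟨h1, h2⟩ | ⟨h1, h2, h3⟩) | (⟨h1, h2⟩ | ⟨h1, h2, h3⟩)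
    · exact Or.inl ⟨by rw [h1], Or.inl h2⟩
    · refine Or.inr ⟨by rw [h1], Or.inl ⟨Nat.even_iff.mp h3, ?_⟩⟩
      rw [h2]; exact val_succ hr p.1
    · exact Or.inl ⟨by rw [h1], Or.inr h2⟩
    · refine Or.inr ⟨by rw [h1], Or.inr ⟨Nat.even_iff.mp h3, ?_⟩⟩
      rw [h2]; exact val_succ hr q.1

lemma ne_arith {r h : ℕ} (hr : 4 ≤ r) {p q : ZMod r × Fin (2 * h + 2)}
    (hpq : p ≠ q) : ¬(p.1.val = q.1.val ∧ (p.2 : ℕ) = (q.2 : ℕ)) := by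
  haveI : NeZero r := ⟨by omega⟩
  rintro ⟨h1, h2⟩
  exact hpq (Prod.ext (ZMod.val_injective r h1) (Fin.ext h2))


lemma earith_flip {r a b a' b' : ℕ} (hr : 4 ≤ r) (m : ℕ) (hm : r = m + m)
    (e : Earith r a b a' b') : (a + b) % 2 ≠ (a' + b') % 2 := by
  unfold Earith at e; omega


lemma zmod01 {r : ℕ} (hr : 4 ≤ r) : (0 : ZMod r) ≠ 1 := by
  haveI : NeZero r := ⟨by omega⟩
  haveI : Fact (1 < r) := ⟨by omega⟩
  intro hEq
  have := congrArg ZMod.val hEq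
  rw [ZMod.val_zero, ZMod.val_one] at this
  exact absurd this (by omega)

lemma hex_cycle {r h : ℕ} (hr : 4 ≤ r) (hh : 1 ≤ h) :
    ∃ (v : ZMod r × Fin (2 * h + 2)) (w : (AT r h).Walk v v), w.IsCycle ∧ w.length = 6 := by
  haveI : NeZero r := ⟨by omega⟩
  haveI : Fact (1 < r) := ⟨by omega⟩
  have h01 := zmod01 hr
  have a01 : (AT r h).Adj ((0 : ZMod r), (⟨0, by omega⟩ : Fin (2 * h + 2))) ((1 : ZMod r), (⟨0, by omega⟩ : Fin (2 * h + 2))) := by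
    rw [AT, SimpleGraph.fromRel_adj]
    exact ⟨fun hEq => h01 (congrArg Prod.fst hEq), Or.inl (Or.inr ⟨rfl, (zero_add 1).symm, by simp⟩)⟩
  have a12 : (AT r h).Adj ((1 : ZMod r), (⟨0, by omega⟩ : Fin (2 * h + 2))) ((1 : ZMod r), (⟨1, by omega⟩ : Fin (2 * h + 2))) := by
    rw [AT, SimpleGraph.fromRel_adj]
    exact ⟨fun hEq => by simpa using congrArg (fun p => (p.2 : ℕ)) hEq, Or.inl (Or.inl ⟨rfl, by simp⟩)⟩
  have a23 : (AT r h).Adj ((1 : ZMod r), (⟨1, by omega⟩ : Fin (2 * h + 2))) ((1 : ZMod r), (⟨2, by omega⟩ : Fin (2 * h + 2))) := by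
    rw [AT, SimpleGraph.fromRel_adj]
    exact ⟨fun hEq => by simpa using congrArg (fun p => (p.2 : ℕ)) hEq, Or.inl (Or.inl ⟨rfl, by simp⟩)⟩
  have a34 : (AT r h).Adj ((1 : ZMod r), (⟨2, by omega⟩ : Fin (2 * h + 2))) ((0 : ZMod r), (⟨2, by omega⟩ : Fin (2 * h + 2))) := by
    rw [AT, SimpleGraph.fromRel_adj]
    exact ⟨fun hEq => h01 (congrArg Prod.fst hEq).symm, Or.inr (Or.inr ⟨rfl, (zero_add 1).symm, by simp⟩)⟩
  have a45 : (AT r h).Adj ((0 : ZMod r), (⟨2, by omega⟩ : Fin (2 * h + 2))) ((0 : ZMod r), (⟨1, by omega⟩ : Fin (2 * h + 2))) := by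
    rw [AT, SimpleGraph.fromRel_adj]
    exact ⟨fun hEq => by simpa using congrArg (fun p => (p.2 : ℕ)) hEq, Or.inr (Or.inl ⟨rfl, by simp⟩)⟩
  have a50 : (AT r h).Adj ((0 : ZMod r), (⟨1, by omega⟩ : Fin (2 * h + 2))) ((0 : ZMod r), (⟨0, by omega⟩ : Fin (2 * h + 2))) := by
    rw [AT, SimpleGraph.fromRel_adj]
    exact ⟨fun hEq => by simpa using congrArg (fun p => (p.2 : ℕ)) hEq, Or.inr (Or.inl ⟨rfl, by simp⟩)⟩
  refine ⟨((0 : ZMod r), (⟨0, by omega⟩ : Fin (2 * h + 2))), .cons a01 (.cons a12 (.cons a23 (.cons a34 (.cons a45 (.cons a50 .nil))))), ?_, rfl⟩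
  constructor
  · constructor
    · constructor
      simp only [SimpleGraph.Walk.edges_cons, SimpleGraph.Walk.edges_nil,
        List.nodup_cons, List.mem_cons, List.not_mem_nil, List.nodup_nil,
        Sym2.eq_iff, Prod.mk.injEq, Fin.mk.injEq]
      simp [h01, h01.symm, fun hEq : (1 : ZMod r) = 0 => h01 hEq.symm]
    · intro hEq; cases hEq
  · simp only [SimpleGraph.Walk.support_cons, SimpleGraph.Walk.support_nil,
      List.tail_cons, List.nodup_cons, List.mem_cons, List.not_mem_nil,
      List.nodup_nil, Prod.mk.injEq, Fin.mk.injEq]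
    simp [h01, h01.symm, fun hEq : (1 : ZMod r) = 0 => h01 hEq.symm]

lemma six_le_cycle {r h : ℕ} (hr : 4 ≤ r) (hre : Even r)
    (v : ZMod r × Fin (2 * h + 2)) (w : (AT r h).Walk v v) (hc : w.IsCycle) :
    6 ≤ w.length := by
  by_contra hlt
  push_neg at hlt
  have h3 := hc.three_le_length
  obtain ⟨m, hm⟩ := hre
  cases w with
  | nil => simp at h3
  | cons h1 w1 =>
  cases w1 with
  | nil => simp at h3
  | cons h2 w2 =>
  cases w2 with
  | nil => simp at h3
  | cons h3' w3 =>
  cases w3 with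
  | nil =>
    have f1 := earith_flip hr m hm (adj_arith hr h1).2
    have f2 := earith_flip hr m hm (adj_arith hr h2).2
    have f3 := earith_flip hr m hm (adj_arith hr h3').2
    omega
  | cons h4 w4 =>
  cases w4 with
  | nil =>
    have hnd := hc.support_nodup
    simp only [SimpleGraph.Walk.support_cons, SimpleGraph.Walk.support_nil,
      List.tail_cons, List.nodup_cons, List.mem_cons, List.mem_singleton,
      List.not_mem_nil, List.nodup_nil, or_false, not_or, and_true] at hnd
    obtain ⟨n1, e1⟩ := adj_arith hr h1
    obtain ⟨n2, e2⟩ := adj_arith hr h2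
    obtain ⟨n3, e3⟩ := adj_arith hr h3'
    obtain ⟨n4, e4⟩ := adj_arith hr h4
    have d1 := ne_arith (h := h) hr hnd.1.2.1
    have d2 := ne_arith (h := h) hr hnd.2.1.2
    unfold Earith at e1 e2 e3 e4
    rcases e1 with ⟨e1a, e1b⟩ | ⟨e1a, e1b⟩ <;>
      rcases e2 with ⟨e2a, e2b⟩ | ⟨e2a, e2b⟩ <;>
      rcases e3 with ⟨e3a, e3b⟩ | ⟨e3a, e3b⟩ <;>
      rcases e4 with ⟨e4a, e4b⟩ | ⟨e4a, e4b⟩ <;>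
      omega
  | cons h5 w5 =>
  cases w5 with
  | nil =>
    have f1 := earith_flip hr m hm (adj_arith hr h1).2
    have f2 := earith_flip hr m hm (adj_arith hr h2).2
    have f3 := earith_flip hr m hm (adj_arith hr h3').2
    have f4 := earith_flip hr m hm (adj_arith hr h4).2
    have f5 := earith_flip hr m hm (adj_arith hr h5).2
    omega
  | cons h6 w6 =>
    simp only [SimpleGraph.Walk.length_cons] at hlt
    omega

theorem AT_egirth (r h : ℕ) (hr : 4 ≤ r) (hre : Even r) (hh : 1 ≤ h) :
    (AT r h).egirth = 6 := by
  apply le_antisymm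
  · obtain ⟨v, w, hc, hlen⟩ := hex_cycle hr hh
    have hle : (AT r h).egirth ≤ (w.length : ℕ∞) := by
      unfold SimpleGraph.egirth
      exact iInf_le_of_le v (iInf_le_of_le w (iInf_le _ hc))
    rw [hlen] at hle
    exact_mod_cast hle
  · rw [SimpleGraph.le_egirth]
    intro a w hw
    exact_mod_cast six_le_cycle hr hre a w hw
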